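/- Let n ≥ 1 and let H : ℝ^n → ℝ be a selector. Then H is a conservative statistic whose module is a polynomial: there exists a polynomial h of degree at most n with h(0) = 0, h(1) = 1, h nondecreasing on [0,1], such that for every Borel probability measure μ on ℝ and every t ∈ ℝ, letting μ^n denote the n-fold product measure on ℝ^n, one has μ^n({x ∈ ℝ^n : H(x) ≤ t}) = h(μ((−∞, t])). -/
import Mathlib


open MeasureTheory

section Aux

variable {n : ℕ} {H : (Fin n → ℝ) → ℝ}

open Set

/-- Connectedness lemma: along a path whose coordinates keep a fixed "pattern" relative to a
moving threshold, the property `H (z s) ≤ τ s` is constant. -/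
theorem selector_path_lemma (hcont : Continuous H)
    (hsel : ∀ x : Fin n → ℝ, ∃ i : Fin n, H x = x i)
    (z : ℝ → (Fin n → ℝ)) (τ : ℝ → ℝ) (hz : Continuous z) (hτ : Continuous τ)
    (S : Set (Fin n))
    (hin : ∀ s ∈ Icc (0:ℝ) 1, ∀ i ∈ S, z s i ≤ τ s)
    (hout : ∀ s ∈ Icc (0:ℝ) 1, ∀ i, i ∉ S → τ s < z s i)
    (h0 : H (z 0) ≤ τ 0) : H (z 1) ≤ τ 1 := by
  set A : Set ℝ := {s | H (z s) ≤ τ s} with hA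
  set B : Set ℝ := ⋃ i ∈ Sᶜ, {s | H (z s) = z s i} with hB
  have hAc : IsClosed A := isClosed_le (hcont.comp hz) hτ
  have hBc : IsClosed B := by
    refine (Set.toFinite Sᶜ).isClosed_biUnion ?_
    intro i _
    exact isClosed_eq (hcont.comp hz) ((continuous_apply i).comp hz)
  have hcover : Icc (0:ℝ) 1 ⊆ A ∪ B := by
    intro s hs
    obtain ⟨i, hi⟩ := hsel (z s)
    by_cases hiS : i ∈ S
    · exact Or.inl (le_trans (le_of_eq hi) (hin s hs i hiS))
    · exact Or.inr (Set.mem_biUnion hiS hi)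
  have hdisj : Disjoint (A ∩ Icc (0:ℝ) 1) (B ∩ Icc (0:ℝ) 1) := by
    rw [Set.disjoint_left]
    rintro s ⟨hsA, hsI⟩ ⟨hsB, _⟩
    obtain ⟨i, hiS, hi⟩ := by
      simpa only [hB, Set.mem_iUnion, Set.mem_setOf_eq, exists_prop, Set.mem_compl_iff]
        using hsB
    exact absurd (hi ▸ hsA) (not_le.mpr (hout s hsI i hiS))
  have key : Icc (0:ℝ) 1 ⊆ A ∩ Icc (0:ℝ) 1 ∨ Icc (0:ℝ) 1 ⊆ B ∩ Icc (0:ℝ) 1 := by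
    refine ((isPreconnected_iff_subset_of_fully_disjoint_closed isClosed_Icc).mp
      isPreconnected_Icc) _ _ (hAc.inter isClosed_Icc) (hBc.inter isClosed_Icc) ?_ hdisj
    intro s hs
    rcases hcover hs with h | h
    · exact Or.inl ⟨h, hs⟩
    · exact Or.inr ⟨h, hs⟩
  have h0I : (0:ℝ) ∈ Icc (0:ℝ) 1 := by constructor <;> norm_num
  have h1I : (1:ℝ) ∈ Icc (0:ℝ) 1 := by constructor <;> norm_num
  rcases key with h | h
  · exact (h h1I).1
  · exact absurd (Set.disjoint_left.mp hdisj ⟨h0, h0I⟩ (h h0I)) (fun h => h)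

end Aux

/-- Any selector is a conservative statistic whose module is (the restriction to `[0,1]` of)
a nondecreasing polynomial of degree at most `n` with `h(0)=0` and `h(1)=1`. -/
theorem selector_is_conservative_with_polynomial_module
    (n : ℕ) (hn : 1 ≤ n) (H : (Fin n → ℝ) → ℝ) (hcont : Continuous H)
    (hsel : ∀ x : Fin n → ℝ, ∃ i : Fin n, H x = x i) :
    ∃ h : Polynomial ℝ, h.natDegree ≤ n ∧ h.eval 0 = 0 ∧ h.eval 1 = 1 ∧
      MonotoneOn (fun t => h.eval t) (Set.Icc (0 : ℝ) 1) ∧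
      ∀ μ : Measure ℝ, IsProbabilityMeasure μ → ∀ t : ℝ,
        ((Measure.pi fun _ : Fin n => μ) {x | H x ≤ t}).toReal =
          h.eval (μ (Set.Iic t)).toReal := by
  classical
  -- canonical pattern point of a finset
  set cpt : Finset (Fin n) → (Fin n → ℝ) := fun S i => if i ∈ S then 0 else 1 with hcpt
  set φ : Finset (Fin n) → Prop := fun S => H (cpt S) ≤ 0 with hφ
  -- main lemma: H x ≤ t iff φ (pattern of x at level t)
  have main : ∀ (t : ℝ) (x : Fin n → ℝ),
      H x ≤ t ↔ φ (Finset.univ.filter (fun i => x i ≤ t)) := by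
    intro t x
    set S : Finset (Fin n) := Finset.univ.filter (fun i => x i ≤ t) with hS
    set z : ℝ → (Fin n → ℝ) := fun s i => (1 - s) * x i + s * cpt S i with hz
    set τ : ℝ → ℝ := fun s => (1 - s) * t with hτ
    have hzc : Continuous z := by
      apply continuous_pi; intro i; fun_prop
    have hτc : Continuous τ := by fun_prop
    have hmemS : ∀ i : Fin n, i ∈ S ↔ x i ≤ t := by
      intro i; simp [hS]
    have hin : ∀ s ∈ Set.Icc (0:ℝ) 1, ∀ i ∈ (↑S : Set (Fin n)), z s i ≤ τ s := by
      intro s hs i hi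
      have hi : i ∈ S := Finset.mem_coe.mp hi
      have hxi : x i ≤ t := (hmemS i).mp hi
      have : cpt S i = 0 := by simp [hcpt, hi]
      simp only [hz, this, mul_zero, add_zero, hτ]
      have h1s : (0:ℝ) ≤ 1 - s := by linarith [hs.2]
      nlinarith
    have hout : ∀ s ∈ Set.Icc (0:ℝ) 1, ∀ i, i ∉ (↑S : Set (Fin n)) → τ s < z s i := by
      intro s hs i hi
      have hi' : i ∉ S := by simpa using hi
      have hxi : t < x i := lt_of_not_ge (fun h => hi' ((hmemS i).mpr h))
      have : cpt S i = 1 := by simp [hcpt, hi']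
      simp only [hz, this, mul_one, hτ]
      have h1s : (0:ℝ) ≤ 1 - s := by linarith [hs.2]
      rcases eq_or_lt_of_le hs.1 with h | h
      · subst h; simpa using hxi
      · nlinarith
    have hz0 : z 0 = x := by funext i; simp [hz]
    have hz1 : z 1 = cpt S := by funext i; simp [hz]
    have hτ0 : τ 0 = t := by simp [hτ]
    have hτ1 : τ 1 = 0 := by simp [hτ]
    constructor
    · intro hx
      have := selector_path_lemma hcont hsel z τ hzc hτc (↑S) hin hout
        (by rw [hz0, hτ0]; exact hx)
      rw [hz1, hτ1] at this; exact this
    · intro hφS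
      -- reverse path
      set z' : ℝ → (Fin n → ℝ) := fun s => z (1 - s) with hz'
      set τ' : ℝ → ℝ := fun s => τ (1 - s) with hτ'
      have := selector_path_lemma hcont hsel z' τ'
        (hzc.comp (by fun_prop)) (hτc.comp (by fun_prop)) (↑S)
        (fun s hs i hi => hin (1 - s) ⟨by linarith [hs.2], by linarith [hs.1]⟩ i hi)
        (fun s hs i hi => hout (1 - s) ⟨by linarith [hs.2], by linarith [hs.1]⟩ i hi)
        (by simp only [hz', hτ', sub_zero]; rw [hz1, hτ1]; exact hφS)
      simp only [hz', hτ', sub_self] at this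
      rw [hz0, hτ0] at this; exact this
  -- φ is false on ∅ and true on univ
  have hφempty : ¬ φ (∅ : Finset (Fin n)) := by
    obtain ⟨i, hi⟩ := hsel (cpt ∅)
    have : cpt (∅ : Finset (Fin n)) i = 1 := by simp [hcpt]
    simp only [hφ, hi, this]; norm_num
  have hφuniv : φ (Finset.univ : Finset (Fin n)) := by
    obtain ⟨i, hi⟩ := hsel (cpt Finset.univ)
    have : cpt (Finset.univ : Finset (Fin n)) i = 0 := by simp [hcpt]
    simp only [hφ, hi, this]; norm_num
  -- define the polynomial
  set F : Finset (Finset (Fin n)) := Finset.univ.filter φ with hF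
  set h : Polynomial ℝ :=
    ∑ S ∈ F, Polynomial.X ^ S.card * (1 - Polynomial.X) ^ (n - S.card) with hh
  have heval : ∀ p : ℝ, h.eval p = ∑ S ∈ F, p ^ S.card * (1 - p) ^ (n - S.card) := by
    intro p
    simp [hh, Polynomial.eval_finset_sum]
  -- the measure identity
  have hmeas : ∀ μ : Measure ℝ, IsProbabilityMeasure μ → ∀ t : ℝ,
      ((Measure.pi fun _ : Fin n => μ) {x | H x ≤ t}).toReal =
        h.eval (μ (Set.Iic t)).toReal := by
    intro μ hμ t
    set P := Measure.pi fun _ : Fin n => μ with hP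
    have : IsProbabilityMeasure P := by infer_instance
    set A : Finset (Fin n) → Set (Fin n → ℝ) := fun S =>
      Set.univ.pi (fun i => if i ∈ S then Set.Iic t else (Set.Iic t)ᶜ) with hA
    have hAmem : ∀ (S : Finset (Fin n)) (x : Fin n → ℝ),
        x ∈ A S ↔ Finset.univ.filter (fun i => x i ≤ t) = S := by
      intro S x
      simp only [hA, Set.mem_pi, Set.mem_univ, forall_true_left, Finset.ext_iff,
        Finset.mem_filter, Finset.mem_univ, true_and]
      constructor
      · intro hx i
        specialize hx i
        by_cases hi : i ∈ S <;> simp [hi] at hx ⊢ <;> simp [hx]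
      · intro hx i
        specialize hx i
        by_cases hi : i ∈ S <;> simp [hi] at hx ⊢ <;> simp [hx]
    have hset : {x : Fin n → ℝ | H x ≤ t} = ⋃ S ∈ F, A S := by
      ext x
      simp only [Set.mem_setOf_eq, Set.mem_iUnion, exists_prop]
      rw [main t x]
      constructor
      · intro hx
        exact ⟨_, by simp [hF, hx], (hAmem _ x).mpr rfl⟩
      · rintro ⟨S, hSF, hxS⟩
        rw [(hAmem S x).mp hxS]
        simpa [hF] using hSF
    have hAm : ∀ S : Finset (Fin n), MeasurableSet (A S) := by
      intro S
      refine MeasurableSet.univ_pi (fun i => ?_)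
      by_cases hi : i ∈ S <;> simp [hi, measurableSet_Iic, (measurableSet_Iic).compl]
    have hdisj : (↑F : Set (Finset (Fin n))).PairwiseDisjoint A := by
      intro S _ S' _ hne
      rw [Function.onFun, Set.disjoint_left]
      intro x hx hx'
      exact hne (((hAmem S x).mp hx).symm.trans ((hAmem S' x).mp hx'))
    have hPA : ∀ S : Finset (Fin n),
        P (A S) = (μ (Set.Iic t)) ^ S.card * (μ (Set.Iic t)ᶜ) ^ (n - S.card) := by
      intro S
      rw [hA, Measure.pi_pi]
      have hstep : ∀ i : Fin n, μ (if i ∈ S then Set.Iic t else (Set.Iic t)ᶜ) =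
          if i ∈ S then μ (Set.Iic t) else μ (Set.Iic t)ᶜ := fun i => apply_ite μ _ _ _
      simp_rw [hstep]
      rw [Finset.prod_ite, Finset.prod_const, Finset.prod_const]
      have e1 : Finset.univ.filter (fun i => i ∈ S) = S := by ext i; simp
      have e2 : Finset.univ.filter (fun i => ¬ i ∈ S) = Sᶜ := by ext i; simp
      rw [e1, e2, Finset.card_compl, Fintype.card_fin]
    have hPsum : P {x | H x ≤ t} = ∑ S ∈ F, P (A S) := by
      rw [hset, measure_biUnion_finset hdisj (fun S _ => hAm S)]
    set a : ℝ := (μ (Set.Iic t)).toReal with ha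
    have hμIic : μ (Set.Iic t) ≠ ⊤ := measure_ne_top μ _
    have hμc : (μ (Set.Iic t)ᶜ).toReal = 1 - a := by
      rw [prob_compl_eq_one_sub measurableSet_Iic]
      rw [ENNReal.toReal_sub_of_le prob_le_one ENNReal.one_ne_top]
      simp [ha]
    rw [hPsum, ENNReal.toReal_sum (fun S _ => by
      rw [hPA S]
      exact ENNReal.mul_ne_top (ENNReal.pow_ne_top hμIic)
        (ENNReal.pow_ne_top (measure_ne_top μ _)))]
    rw [heval]
    refine Finset.sum_congr rfl (fun S _ => ?_)
    rw [hPA S, ENNReal.toReal_mul, ENNReal.toReal_pow, ENNReal.toReal_pow, hμc]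
  -- now assemble all the properties
  refine ⟨h, ?_, ?_, ?_, ?_, hmeas⟩
  · -- degree bound
    refine le_trans (Polynomial.natDegree_sum_le _ _) ?_
    rw [Finset.fold_max_le]
    refine ⟨Nat.zero_le n, fun S hS => ?_⟩
    refine le_trans (Polynomial.natDegree_mul_le) ?_
    have h1 : (Polynomial.X ^ S.card : Polynomial ℝ).natDegree ≤ S.card := by
      simpa using Polynomial.natDegree_pow_le (p := (Polynomial.X : Polynomial ℝ)) (n := S.card)
    have h2 : ((1 - Polynomial.X : Polynomial ℝ) ^ (n - S.card)).natDegree ≤ n - S.card := by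
      refine le_trans (Polynomial.natDegree_pow_le) ?_
      have : (1 - Polynomial.X : Polynomial ℝ).natDegree ≤ 1 := by
        refine le_trans (Polynomial.natDegree_sub_le _ _) ?_
        simp
      nlinarith [this]
    have hcard : S.card ≤ n := by simpa using S.card_le_univ
    omega
  · -- eval at 0
    rw [heval]
    refine Finset.sum_eq_zero (fun S hS => ?_)
    have hSne : S ≠ ∅ := by
      intro hSe
      rw [hF, Finset.mem_filter] at hS
      exact hφempty (hSe ▸ hS.2)
    have : S.card ≠ 0 := fun hc => hSne (Finset.card_eq_zero.mp hc)
    simp [zero_pow this]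
  · -- eval at 1
    rw [heval]
    rw [Finset.sum_eq_single Finset.univ]
    · simp
    · intro S hS hne
      have : S.card < n := by
        have h1 : S.card ≤ n := by simpa using S.card_le_univ
        rcases lt_or_eq_of_le h1 with h | h
        · exact h
        · exact absurd (Finset.eq_univ_of_card S (by simpa using h)) hne
      have : n - S.card ≠ 0 := by omega
      simp [zero_pow this]
    · intro hu
      exact absurd (by simp [hF, hφuniv] : Finset.univ ∈ F) hu
  · -- monotone on [0,1] via uniform measure
    set μ0 : Measure ℝ := (volume : Measure ℝ).restrict (Set.Icc 0 1) with hμ0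
    have hμ0prob : IsProbabilityMeasure μ0 := by
      constructor
      rw [hμ0, Measure.restrict_apply MeasurableSet.univ, Set.univ_inter, Real.volume_Icc]
      norm_num
    have hμ0Iic : ∀ t ∈ Set.Icc (0:ℝ) 1, (μ0 (Set.Iic t)).toReal = t := by
      intro t ht
      rw [hμ0, Measure.restrict_apply measurableSet_Iic]
      have : Set.Iic t ∩ Set.Icc (0:ℝ) 1 = Set.Icc 0 t := by
        ext x
        simp only [Set.mem_inter_iff, Set.mem_Iic, Set.mem_Icc]
        constructor
        · rintro ⟨h1, h2, h3⟩; exact ⟨h2, h1⟩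
        · rintro ⟨h1, h2⟩; exact ⟨h2, h1, le_trans h2 ht.2⟩
      rw [this, Real.volume_Icc, ENNReal.toReal_ofReal (by linarith [ht.1])]
      ring
    intro p hp q hq hpq
    have h1 := hmeas μ0 hμ0prob p
    have h2 := hmeas μ0 hμ0prob q
    rw [hμ0Iic p hp] at h1
    rw [hμ0Iic q hq] at h2
    simp only []
    rw [← h1, ← h2]
    have hsub : {x : Fin n → ℝ | H x ≤ p} ⊆ {x | H x ≤ q} :=
      fun x hx => le_trans hx hpq
    have : IsProbabilityMeasure (Measure.pi fun _ : Fin n => μ0) := by infer_instance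
    exact ENNReal.toReal_mono (measure_ne_top _ _) (measure_mono hsub)
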